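/- arXiv:0906.4586 — 2 statements merged into one kernel-verified Lean document; each statement's English description precedes it below -/
import Mathlib

section
/- Soundness of sequential composition for partial correctness: suppose S₁, S₂ are positivity-preserving trace-non-increasing linear maps on operators, and for all positive ρ: tr(P ρ) ≤ tr(Q S₁(ρ)) + (tr(ρ) − tr(S₁(ρ))), and for all positive σ: tr(Q σ) ≤ tr(R S₂(σ)) + (tr(σ) − tr(S₂(σ))). Then for all positive ρ: tr(P ρ) ≤ tr(R S₂(S₁(ρ))) + (tr(ρ) − tr(S₂(S₁(ρ)))). -/
open Matrix ComplexOrder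

/-- Soundness of sequential composition for partial correctness. -/
theorem seq_rule_partial {n : Type*} [Fintype n] [DecidableEq n]
    (P Q R : Matrix n n ℂ) (hP : P.IsHermitian) (hQ : Q.IsHermitian) (hR : R.IsHermitian)
    (S₁ S₂ : Matrix n n ℂ →ₗ[ℂ] Matrix n n ℂ)
    (hS₁pos : ∀ ρ : Matrix n n ℂ, ρ.PosSemidef → (S₁ ρ).PosSemidef)
    (hS₂pos : ∀ ρ : Matrix n n ℂ, ρ.PosSemidef → (S₂ ρ).PosSemidef)
    (hS₁tr : ∀ ρ : Matrix n n ℂ, ρ.PosSemidef → (S₁ ρ).trace ≤ ρ.trace)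
    (hS₂tr : ∀ ρ : Matrix n n ℂ, ρ.PosSemidef → (S₂ ρ).trace ≤ ρ.trace)
    (h1 : ∀ ρ : Matrix n n ℂ, ρ.PosSemidef →
      (P * ρ).trace ≤ (Q * S₁ ρ).trace + (ρ.trace - (S₁ ρ).trace))
    (h2 : ∀ σ : Matrix n n ℂ, σ.PosSemidef →
      (Q * σ).trace ≤ (R * S₂ σ).trace + (σ.trace - (S₂ σ).trace)) :
    ∀ ρ : Matrix n n ℂ, ρ.PosSemidef →
      (P * ρ).trace ≤ (R * S₂ (S₁ ρ)).trace + (ρ.trace - (S₂ (S₁ ρ)).trace) := by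
  intro ρ hρ
  have h1' := h1 ρ hρ
  have h2' := h2 (S₁ ρ) (hS₁pos ρ hρ)
  calc (P * ρ).trace ≤ (Q * S₁ ρ).trace + (ρ.trace - (S₁ ρ).trace) := h1'
    _ ≤ ((R * S₂ (S₁ ρ)).trace + ((S₁ ρ).trace - (S₂ (S₁ ρ)).trace)) + (ρ.trace - (S₁ ρ).trace) :=
        add_le_add_left h2' _
    _ = (R * S₂ (S₁ ρ)).trace + (ρ.trace - (S₂ (S₁ ρ)).trace) := by ring
end

section
/- Fixed-point inequality used in the loop rule: let E₀(ρ) = M₀ρM₀†, E₁(ρ) = M₁ρM₁† with M₀†M₀ + M₁†M₁ = I, and let T be a positivity-preserving trace-non-increasing linear map. If Hermitian P, Q with 0 ⊑ P, Q ⊑ I satisfy tr(Q σ) ≤ tr((M₀†PM₀ + M₁†QM₁) T(σ)) + tr(σ) − tr(T(σ)) for all positive σ, then for every positive ρ and every n ≥ 0: tr((M₀†PM₀ + M₁†QM₁) ρ) ≤ ∑_{k=0}^{n} tr(P (E₀ ∘ (T∘E₁)^k)(ρ)) + tr(Q (E₁ ∘ (T∘E₁)^n)(ρ)) + ∑_{k=0}^{n-1}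 [tr((E₁ ∘ (T∘E₁)^k)(ρ)) − tr((T∘E₁)^{k+1}(ρ))]. -/
open Matrix ComplexOrder Finset

/-- Fixed-point inequality used in the soundness proof of the loop rule. -/
theorem loop_fixed_point_ineq {n : Type*} [Fintype n] [DecidableEq n]
    (M₀ M₁ P Q : Matrix n n ℂ) (hM : M₀ᴴ * M₀ + M₁ᴴ * M₁ = 1)
    (E₀ E₁ T : Matrix n n ℂ →ₗ[ℂ] Matrix n n ℂ)
    (hE₀ : ∀ ρ : Matrix n n ℂ, E₀ ρ = M₀ * ρ * M₀ᴴ)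
    (hE₁ : ∀ ρ : Matrix n n ℂ, E₁ ρ = M₁ * ρ * M₁ᴴ)
    (hTpos : ∀ σ : Matrix n n ℂ, σ.PosSemidef → (T σ).PosSemidef)
    (hTtr : ∀ σ : Matrix n n ℂ, σ.PosSemidef → (T σ).trace ≤ σ.trace)
    (hPherm : P.IsHermitian) (hP0 : P.PosSemidef) (hP1 : (1 - P).PosSemidef)
    (hQherm : Q.IsHermitian) (hQ0 : Q.PosSemidef) (hQ1 : (1 - Q).PosSemidef)
    (h : ∀ σ : Matrix n n ℂ, σ.PosSemidef →
      (Q * σ).trace ≤ ((M₀ᴴ * P * M₀ + M₁ᴴ * Q * M₁) * T σ).trace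
        + σ.trace - (T σ).trace) :
    ∀ ρ : Matrix n n ℂ, ρ.PosSemidef → ∀ N : ℕ,
      ((M₀ᴴ * P * M₀ + M₁ᴴ * Q * M₁) * ρ).trace ≤
        (∑ k ∈ range (N + 1), (P * E₀ (((T ∘ₗ E₁) ^ k) ρ)).trace)
          + (Q * E₁ (((T ∘ₗ E₁) ^ N) ρ)).trace
          + ∑ k ∈ range N,
              ((E₁ (((T ∘ₗ E₁) ^ k) ρ)).trace - (((T ∘ₗ E₁) ^ (k + 1)) ρ).trace) := by
  intro ρ hρ N
  -- expansion of trace of R * σ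
  have key : ∀ σ : Matrix n n ℂ,
      ((M₀ᴴ * P * M₀ + M₁ᴴ * Q * M₁) * σ).trace
        = (P * E₀ σ).trace + (Q * E₁ σ).trace := by
    intro σ
    rw [hE₀, hE₁, add_mul, trace_add]
    congr 1
    · rw [Matrix.mul_assoc, Matrix.trace_mul_comm, ← Matrix.mul_assoc, ← Matrix.mul_assoc,
        Matrix.trace_mul_cycle]
    · rw [Matrix.mul_assoc, Matrix.trace_mul_comm, ← Matrix.mul_assoc, ← Matrix.mul_assoc,
        Matrix.trace_mul_cycle]
  -- PSD of iterates
  have hSpos : ∀ k : ℕ, (((T ∘ₗ E₁) ^ k) ρ).PosSemidef := by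
    intro k
    induction k with
    | zero => simpa using hρ
    | succ k ih =>
        rw [pow_succ', Module.End.mul_apply, LinearMap.comp_apply]
        refine hTpos _ ?_
        rw [hE₁ (((T ∘ₗ E₁) ^ k) ρ)]
        exact ih.mul_mul_conjTranspose_same M₁
  induction N with
  | zero =>
      simp [key ρ]
  | succ N ih =>
      have hσ : (E₁ (((T ∘ₗ E₁) ^ N) ρ)).PosSemidef := by
        rw [hE₁]; exact (hSpos N).mul_mul_conjTranspose_same M₁
      have hstep := h _ hσ
      have hT : T (E₁ (((T ∘ₗ E₁) ^ N) ρ)) = ((T ∘ₗ E₁) ^ (N + 1)) ρ := by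
        rw [pow_succ', Module.End.mul_apply, LinearMap.comp_apply]
      rw [hT, key (((T ∘ₗ E₁) ^ (N + 1)) ρ)] at hstep
      calc ((M₀ᴴ * P * M₀ + M₁ᴴ * Q * M₁) * ρ).trace
          ≤ (∑ k ∈ range (N + 1), (P * E₀ (((T ∘ₗ E₁) ^ k) ρ)).trace)
            + (Q * E₁ (((T ∘ₗ E₁) ^ N) ρ)).trace
            + ∑ k ∈ range N,
                ((E₁ (((T ∘ₗ E₁) ^ k) ρ)).trace - (((T ∘ₗ E₁) ^ (k + 1)) ρ).trace) := ih
        _ ≤ (∑ k ∈ range (N + 1), (P * E₀ (((T ∘ₗ E₁) ^ k) ρ)).trace)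
            + ((P * E₀ (((T ∘ₗ E₁) ^ (N + 1)) ρ)).trace
              + (Q * E₁ (((T ∘ₗ E₁) ^ (N + 1)) ρ)).trace
              + (E₁ (((T ∘ₗ E₁) ^ N) ρ)).trace - (((T ∘ₗ E₁) ^ (N + 1)) ρ).trace)
            + ∑ k ∈ range N,
                ((E₁ (((T ∘ₗ E₁) ^ k) ρ)).trace - (((T ∘ₗ E₁) ^ (k + 1)) ρ).trace) := by
              gcongr
        _ = _ := by
              simp only [Finset.sum_range_succ]
              ring
end
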